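/- Let (u,v,w,δ) ∈ ℝ⁴ satisfy δ² = Q(u,v,w), and assume S := 3 + 2(u+v+w) > 0 and N := 2(u+1) − (v+w)² > 0. Define r₁ := (√(N/S), 0, (v+w+1)/√S), r₂ := ((w(u+v+1) − (u+1)(v+1) + w²)/√(N·S), δ/√N, (u+w+1)/√S), and r₃ := ((v(w+u+1) − (w+1)(u+1) + v²)/√(N·S), −δ/√N, (u+v+1)/√S). Then r₁, r₂, r₃ are unit vectors with r₂·r₃ = u, r₃·r₁ = v, r₁·r₂ = w, r₁·(r₂ × r₃) = δ, and r₁ + r₂ + r₃ = (0, 0, √S). -/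

import Mathlib

open Matrix

set_option maxHeartbeats 4000000 in
/-- the standard spin configuration `r₁, r₂, r₃` realizing the internal
variables `(u,v,w,δ)` consists of unit vectors with `r₂·r₃ = u`, `r₃·r₁ = v`, `r₁·r₂ = w`,
`r₁·(r₂ × r₃) = δ` and total spin `(0,0,√S)` where `S = 3 + 2(u+v+w)`. -/
theorem standard_configuration_realizes (u v w δ : ℝ)
    (hδ : δ ^ 2 = 1 - u ^ 2 - v ^ 2 - w ^ 2 + 2 * u * v * w)
    (hS : 0 < 3 + 2 * (u + v + w))
    (hN : 0 < 2 * (u + 1) - (v + w) ^ 2)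
    (r₁ r₂ r₃ : Fin 3 → ℝ)
    (hr₁ : r₁ = ![Real.sqrt ((2 * (u + 1) - (v + w) ^ 2) / (3 + 2 * (u + v + w))), 0,
        (v + w + 1) / Real.sqrt (3 + 2 * (u + v + w))])
    (hr₂ : r₂ = ![(w * (u + v + 1) - (u + 1) * (v + 1) + w ^ 2) /
          Real.sqrt ((2 * (u + 1) - (v + w) ^ 2) * (3 + 2 * (u + v + w))),
        δ / Real.sqrt (2 * (u + 1) - (v + w) ^ 2),
        (u + w + 1) / Real.sqrt (3 + 2 * (u + v + w))])
    (hr₃ : r₃ = ![(v * (w + u + 1) - (w + 1) * (u + 1) + v ^ 2) /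
          Real.sqrt ((2 * (u + 1) - (v + w) ^ 2) * (3 + 2 * (u + v + w))),
        -δ / Real.sqrt (2 * (u + 1) - (v + w) ^ 2),
        (u + v + 1) / Real.sqrt (3 + 2 * (u + v + w))]) :
    r₁ ⬝ᵥ r₁ = 1 ∧ r₂ ⬝ᵥ r₂ = 1 ∧ r₃ ⬝ᵥ r₃ = 1 ∧
    r₂ ⬝ᵥ r₃ = u ∧ r₃ ⬝ᵥ r₁ = v ∧ r₁ ⬝ᵥ r₂ = w ∧
    r₁ ⬝ᵥ crossProduct r₂ r₃ = δ ∧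
    r₁ + r₂ + r₃ = ![0, 0, Real.sqrt (3 + 2 * (u + v + w))] := by
  have hs : Real.sqrt (3 + 2 * (u + v + w)) ^ 2 = 3 + 2 * (u + v + w) := Real.sq_sqrt hS.le
  have hn : Real.sqrt (2 * (u + 1) - (v + w) ^ 2) ^ 2 = 2 * (u + 1) - (v + w) ^ 2 :=
    Real.sq_sqrt hN.le
  have hspos : 0 < Real.sqrt (3 + 2 * (u + v + w)) := Real.sqrt_pos.2 hS
  have hnpos : 0 < Real.sqrt (2 * (u + 1) - (v + w) ^ 2) := Real.sqrt_pos.2 hN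
  have hns : Real.sqrt ((2 * (u + 1) - (v + w) ^ 2) * (3 + 2 * (u + v + w)))
      = Real.sqrt (2 * (u + 1) - (v + w) ^ 2) * Real.sqrt (3 + 2 * (u + v + w)) :=
    Real.sqrt_mul hN.le _
  have hdiv : Real.sqrt ((2 * (u + 1) - (v + w) ^ 2) / (3 + 2 * (u + v + w)))
      = Real.sqrt (2 * (u + 1) - (v + w) ^ 2) / Real.sqrt (3 + 2 * (u + v + w)) :=
    Real.sqrt_div hN.le _
  rw [hns] at hr₂ hr₃; rw [hdiv] at hr₁
  generalize hsv : Real.sqrt (3 + 2 * (u + v + w)) = s at *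
  generalize hnv : Real.sqrt (2 * (u + 1) - (v + w) ^ 2) = n at *
  subst hr₁ hr₂ hr₃
  refine ⟨?_, ?_, ?_, ?_, ?_, ?_, ?_, ?_⟩
  case refine_8 =>
    funext i
    fin_cases i
    · simp only [Pi.add_apply, Matrix.cons_val_zero, Fin.isValue, Fin.zero_eta]
      field_simp
      linear_combination ((1)) * hn
    · simp only [Pi.add_apply, Matrix.cons_val_one, Matrix.head_cons, Fin.isValue, Fin.mk_one,
        Matrix.cons_val_zero]
      field_simp
      ring
    · simp only [Pi.add_apply, Fin.isValue, Matrix.cons_val_two, Matrix.tail_cons,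
        Matrix.head_cons, Fin.reduceFinMk]
      field_simp
      linear_combination ((-1)) * hs
  all_goals
    simp only [crossProduct, dotProduct, Fin.sum_univ_three, Matrix.cons_val_zero,
      Matrix.cons_val_one, Matrix.head_cons, Matrix.cons_val_two, Matrix.tail_cons,
      LinearMap.mk₂_apply]
    field_simp
  · linear_combination ((-1)) * hs + ((1)) * hn
  · linear_combination (n^2 + (-2)*n^2*w + (-1)*n^2*w^2 + (2)*n^2*w^3 + n^2*w^4 + (2)*n^2*v + (-4)*n^2*v*w + (2)*n^2*v*w^3 + n^2*v^2 + (-2)*n^2*v^2*w + n^2*v^2*w^2 + (2)*n^2*u + (-4)*n^2*u*w + (2)*n^2*u*w^3 + (4)*n^2*u*v + (-6)*n^2*u*v*w + (2)*n^2*u*v^2 + (-2)*n^2*u*v^2*w + n^2*u^2 + (-2)*n^2*u^2*w + n^2*u^2*w^2 + (2)*n^2*u^2*v + (-2)*n^2*u^2*v*w + n^2*u^2*v^2 + (3)*n^2*δ^2 + (2)*n^2*δ^2*w + (2)*n^2*δ^2*v + (2)*n^2*δ^2*u + (-2)*n^4 + n^4*w^2 + (-2)*n^4*v + (2)*n^4*u*w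 + n^4*u^2 + s^2*n^2*δ^2 + (-1)*s^2*n^4) * hs + ((-9) + (-12)*w + (5)*w^2 + (12)*w^3 + (4)*w^4 + (-12)*v + (-8)*v*w + (12)*v*w^2 + (8)*v*w^3 + (5)*v^2 + (12)*v^2*w + (8)*v^2*w^2 + (12)*v^3 + (8)*v^3*w + (4)*v^4 + (-12)*u + (-8)*u*w + (12)*u*w^2 + (8)*u*w^3 + (-8)*u*v + (-18)*u*v*w + (-16)*u*v*w^2 + (-8)*u*v*w^3 + (12)*u*v^2 + (-16)*u*v^2*w + (-16)*u*v^2*w^2 + (8)*u*v^3 + (-8)*u*v^3*w + (5)*u^2 + (12)*u^2*w + (8)*u^2*w^2 + (12)*u^2*v + (-16)*u^2*v*w + (-16)*u^2*v*w^2 + (8)*u^2*v^2 + (-16)*u^2*v^2*w + (12)*u^3 + (8)*u^3*w + (8)*u^3*v + (-8)*u^3*v*w + (4)*u^4 + (9)*δ^2 + (12)*δ^2*w + (4)*δ^2*w^2 + (12)*δ^2*v + (8)*δ^2*v*w + (4)*δ^2*v^2 + (12)*δ^2*u + (8)*δ^2*u*w + (8)*δ^2*u*v + (4)*δ^2*u^2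 + (-6)*n^2 + (-4)*n^2*w + (3)*n^2*w^2 + (2)*n^2*w^3 + (-10)*n^2*v + (-4)*n^2*v*w + (2)*n^2*v*w^2 + (-4)*n^2*v^2 + (-4)*n^2*u + (6)*n^2*u*w + (6)*n^2*u*w^2 + (-4)*n^2*u*v + (4)*n^2*u*v*w + (3)*n^2*u^2 + (6)*n^2*u^2*w + (2)*n^2*u^2*v + (2)*n^2*u^3) * hn + ((18) + (24)*w + (-1)*w^2 + (-12)*w^3 + (-4)*w^4 + (24)*v + (-2)*v*w + (-36)*v*w^2 + (-16)*v*w^3 + (-1)*v^2 + (-36)*v^2*w + (-24)*v^2*w^2 + (-12)*v^3 + (-16)*v^3*w + (-4)*v^4 + (42)*u + (40)*u*w + (-4)*u*w^2 + (-8)*u*w^3 + (40)*u*v + (-8)*u*v*w + (-24)*u*v*w^2 + (-4)*u*v^2 + (-24)*u*v^2*w + (-8)*u*v^3 + (32)*u^2 + (16)*u^2*w + (-4)*u^2*w^2 + (16)*u^2*v + (-8)*u^2*v*w + (-4)*u^2*v^2 + (8)*u^3) * hδ + ((6)*u*v*w*n^2 + (2)*u*v^2*w*n^2 + (4)*u*w*n^2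 + (-2)*u*w*n^4 + (2)*u^2*v*w*n^2 + (2)*u^2*w*n^2 + (4)*v*w*n^2 + (2)*v^2*w*n^2 + (2)*w*n^2 + (-1)*u^2*w^2*n^2 + (-1)*v^2*w^2*n^2 + (1)*w^2*n^2 + (-1)*w^2*n^4 + (-2)*u*w^3*n^2 + (-2)*v*w^3*n^2 + (-2)*w^3*n^2 + (-1)*w^4*n^2 + (-4)*u*v*n^2 + (-2)*u*v^2*n^2 + (-2)*u*n^2 + (-2)*u^2*v*n^2 + (-1)*u^2*v^2*n^2 + (-1)*u^2*n^2 + (-1)*u^2*n^4 + (-2)*v*n^2 + (-1)*v^2*n^2 + (1)*δ^2 + (-2)*n^2 + (2)*n^4 + (-1)*δ^2*s^2*n^2 + (1)*s^2*n^4 + (-2)*u*δ^2*n^2 + (-2)*v*δ^2*n^2 + (-2)*w*δ^2*n^2 + (-3)*δ^2*n^2 + (2)*v*n^4) * hs + ((10)*u*w + (12)*w + (-4)*w^2 + (12)*u + (-4)*u^2 + (7) + (16)*u^2*v*w + (16)*u*v^2*w + (16)*u*v*w^2 + (18)*u*v*w + (16)*u^2*v^2*w + (8)*u*v^3*w + (16)*u*v^2*w^2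 + (-12)*u^2*w + (-12)*u*w^2 + (-6)*u^2*w*n^2 + (-4)*u*v*w*n^2 + (-6)*u*w^2*n^2 + (-6)*u*w*n^2 + (8)*u^3*v*w + (16)*u^2*v*w^2 + (-8)*u^3*w + (-8)*u^2*w^2 + (-12)*v^2*w + (-12)*v*w^2 + (8)*v*w + (-8)*v^3*w + (-8)*v^2*w^2 + (4)*v*w*n^2 + (-3)*w^2*n^2 + (4)*w*n^2 + (-2)*v*w^2*n^2 + (-2)*w^3*n^2 + (8)*u*v*w^3 + (-8)*v*w^3 + (-12)*u^2*v + (-12)*u*v^2 + (8)*u*v + (-8)*u^2*v^2 + (-3)*u^2*n^2 + (4)*u*v*n^2 + (4)*u*n^2 + (-8)*u^3*v + (-12)*u^3 + (-2)*u^3*n^2 + (-2)*u^2*v*n^2 + (-5)*v^2 + (10)*v + (10)*v*n^2 + (6)*n^2 + (-4)*u^4 + (-4)*u^2*δ^2 + (-8)*u*v*δ^2 + (-8)*u*w*δ^2 + (-12)*u*δ^2 + (-4)*v^2*δ^2 + (-8)*v*w*δ^2 + (-12)*v*δ^2 + (-4)*w^2*δ^2 + (-12)*w*δ^2 + (-9)*δ^2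 + (4)*v^2*n^2 + (-8)*u*v^3 + (-8)*u*w^3 + (-4)*v^4 + (-12)*v^3 + (-4)*w^4 + (-12)*w^3) * hn + ((-40)*u + (-22)*v + (-22)*w + (-15) + (-8)*u^3 + (-32)*u^2 + (4)*u^2*v^2 + (8)*u^2*v*w + (4)*u^2*w^2 + (-16)*u^2*v + (-40)*u*v + (8)*u*v^3 + (24)*u*v^2*w + (24)*u*v*w^2 + (-16)*u^2*w + (-40)*u*w + (8)*u*w^3 + (4)*u*v^2 + (8)*u*v*w + (4)*u*w^2 + (1)*v^2 + (4)*v^4 + (16)*v^3*w + (24)*v^2*w^2 + (2)*v*w + (16)*v*w^3 + (12)*v^3 + (36)*v^2*w + (36)*v*w^2 + (1)*w^2 + (4)*w^4 + (12)*w^3) * hδ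
  · linear_combination (n^2 + (2)*n^2*w + n^2*w^2 + (-2)*n^2*v + (-4)*n^2*v*w + (-2)*n^2*v*w^2 + (-1)*n^2*v^2 + n^2*v^2*w^2 + (2)*n^2*v^3 + (2)*n^2*v^3*w + n^2*v^4 + (2)*n^2*u + (4)*n^2*u*w + (2)*n^2*u*w^2 + (-4)*n^2*u*v + (-6)*n^2*u*v*w + (-2)*n^2*u*v*w^2 + (2)*n^2*u*v^3 + n^2*u^2 + (2)*n^2*u^2*w + n^2*u^2*w^2 + (-2)*n^2*u^2*v + (-2)*n^2*u^2*v*w + n^2*u^2*v^2 + (3)*n^2*δ^2 + (2)*n^2*δ^2*w + (2)*n^2*δ^2*v + (2)*n^2*δ^2*u + (-2)*n^4 + (-2)*n^4*w + n^4*v^2 + (2)*n^4*u*v + n^4*u^2 + s^2*n^2*δ^2 + (-1)*s^2*n^4) * hs + ((-9) + (-12)*w + (5)*w^2 + (12)*w^3 + (4)*w^4 + (-12)*v + (-8)*v*w + (12)*v*w^2 + (8)*v*w^3 + (5)*v^2 + (12)*v^2*w + (8)*v^2*w^2 + (12)*v^3 + (8)*v^3*w + (4)*v^4 + (-12)*u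 + (-8)*u*w + (12)*u*w^2 + (8)*u*w^3 + (-8)*u*v + (-18)*u*v*w + (-16)*u*v*w^2 + (-8)*u*v*w^3 + (12)*u*v^2 + (-16)*u*v^2*w + (-16)*u*v^2*w^2 + (8)*u*v^3 + (-8)*u*v^3*w + (5)*u^2 + (12)*u^2*w + (8)*u^2*w^2 + (12)*u^2*v + (-16)*u^2*v*w + (-16)*u^2*v*w^2 + (8)*u^2*v^2 + (-16)*u^2*v^2*w + (12)*u^3 + (8)*u^3*w + (8)*u^3*v + (-8)*u^3*v*w + (4)*u^4 + (9)*δ^2 + (12)*δ^2*w + (4)*δ^2*w^2 + (12)*δ^2*v + (8)*δ^2*v*w + (4)*δ^2*v^2 + (12)*δ^2*u + (8)*δ^2*u*w + (8)*δ^2*u*v + (4)*δ^2*u^2 + (-6)*n^2 + (-10)*n^2*w + (-4)*n^2*w^2 + (-4)*n^2*v + (-4)*n^2*v*w + (3)*n^2*v^2 + (2)*n^2*v^2*w + (2)*n^2*v^3 + (-4)*n^2*u + (-4)*n^2*u*w + (6)*n^2*u*v + (4)*n^2*u*v*w + (6)*n^2*u*v^2 + (3)*n^2*u^2 + (2)*n^2*u^2*w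 + (6)*n^2*u^2*v + (2)*n^2*u^3) * hn + ((18) + (24)*w + (-1)*w^2 + (-12)*w^3 + (-4)*w^4 + (24)*v + (-2)*v*w + (-36)*v*w^2 + (-16)*v*w^3 + (-1)*v^2 + (-36)*v^2*w + (-24)*v^2*w^2 + (-12)*v^3 + (-16)*v^3*w + (-4)*v^4 + (42)*u + (40)*u*w + (-4)*u*w^2 + (-8)*u*w^3 + (40)*u*v + (-8)*u*v*w + (-24)*u*v*w^2 + (-4)*u*v^2 + (-24)*u*v^2*w + (-8)*u*v^3 + (32)*u^2 + (16)*u^2*w + (-4)*u^2*w^2 + (16)*u^2*v + (-8)*u^2*v*w + (-4)*u^2*v^2 + (8)*u^3) * hδ + ((6)*u*v*w*n^2 + (2)*u^2*v*w*n^2 + (4)*v*w*n^2 + (2)*u*v*w^2*n^2 + (2)*v*w^2*n^2 + (4)*u*v*n^2 + (-2)*u*v*n^4 + (2)*u^2*v*n^2 + (2)*v*n^2 + (-1)*v^2*w^2*n^2 + (-1)*u^2*v^2*n^2 + (1)*v^2*n^2 + (-1)*v^2*n^4 + (-2)*v^3*w*n^2 + (-2)*u*v^3*n^2 + (-2)*v^3*n^2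 + (-1)*v^4*n^2 + (-4)*u*w*n^2 + (-2)*u^2*w*n^2 + (-2)*w*n^2 + (-2)*u*w^2*n^2 + (-1)*u^2*w^2*n^2 + (-1)*w^2*n^2 + (-2)*u*n^2 + (-1)*u^2*n^2 + (-1)*u^2*n^4 + (1)*δ^2 + (-2)*n^2 + (2)*n^4 + (-1)*δ^2*s^2*n^2 + (1)*s^2*n^4 + (-2)*u*δ^2*n^2 + (-2)*v*δ^2*n^2 + (-2)*w*δ^2*n^2 + (-3)*δ^2*n^2 + (2)*w*n^4) * hs + ((10)*u*v + (12)*v + (-4)*v^2 + (12)*u + (-4)*u^2 + (7) + (16)*u^2*v*w + (16)*u*v^2*w + (16)*u*v*w^2 + (18)*u*v*w + (8)*u^3*v*w + (16)*u^2*v^2*w + (16)*u^2*v*w^2 + (-12)*v^2*w + (-12)*v*w^2 + (8)*v*w + (16)*u*v^2*w^2 + (8)*u*v*w^3 + (-8)*v^2*w^2 + (-8)*v*w^3 + (-12)*u^2*v + (-12)*u*v^2 + (-6)*u^2*v*n^2 + (-6)*u*v^2*n^2 + (-4)*u*v*w*n^2 + (-6)*u*v*n^2 + (-8)*u^3*v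 + (-8)*u^2*v^2 + (-3)*v^2*n^2 + (4)*v*w*n^2 + (4)*v*n^2 + (-2)*v^3*n^2 + (-2)*v^2*w*n^2 + (8)*u*v^3*w + (-8)*v^3*w + (-12)*u^2*w + (-12)*u*w^2 + (8)*u*w + (-8)*u^3*w + (-8)*u^2*w^2 + (-5)*w^2 + (10)*w + (-3)*u^2*n^2 + (4)*u*w*n^2 + (4)*u*n^2 + (-12)*u^3 + (-2)*u^3*n^2 + (-2)*u^2*w*n^2 + (10)*w*n^2 + (6)*n^2 + (-4)*u^4 + (-4)*u^2*δ^2 + (-8)*u*v*δ^2 + (-8)*u*w*δ^2 + (-12)*u*δ^2 + (-4)*v^2*δ^2 + (-8)*v*w*δ^2 + (-12)*v*δ^2 + (-4)*w^2*δ^2 + (-12)*w*δ^2 + (-9)*δ^2 + (4)*w^2*n^2 + (-8)*u*v^3 + (-8)*u*w^3 + (-4)*v^4 + (-12)*v^3 + (-4)*w^4 + (-12)*w^3) * hn + ((-40)*u + (-22)*v + (-22)*w + (-15) + (-8)*u^3 + (-32)*u^2 + (4)*u^2*v^2 + (8)*u^2*v*w + (4)*u^2*w^2 + (-16)*u^2*v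 + (-40)*u*v + (8)*u*v^3 + (24)*u*v^2*w + (24)*u*v*w^2 + (-16)*u^2*w + (-40)*u*w + (8)*u*w^3 + (4)*u*v^2 + (8)*u*v*w + (4)*u*w^2 + (1)*v^2 + (4)*v^4 + (16)*v^3*w + (24)*v^2*w^2 + (2)*v*w + (16)*v*w^3 + (12)*v^3 + (36)*v^2*w + (36)*v*w^2 + (1)*w^2 + (4)*w^4 + (12)*w^3) * hδ
  · linear_combination (n^2 + (-2)*n^2*w^2 + (-1)*n^2*w^3 + n^2*v*w^2 + n^2*v*w^3 + (-2)*n^2*v^2 + n^2*v^2*w + (2)*n^2*v^2*w^2 + (-1)*n^2*v^3 + n^2*v^3*w + (2)*n^2*u + (-3)*n^2*u*w^2 + (-1)*n^2*u*w^3 + (2)*n^2*u*v*w + n^2*u*v*w^2 + (-3)*n^2*u*v^2 + n^2*u*v^2*w + (-1)*n^2*u*v^3 + n^2*u^2 + (-1)*n^2*u^2*w^2 + (2)*n^2*u^2*v*w + (-1)*n^2*u^2*v^2 + (-3)*n^2*δ^2 + (-2)*n^2*δ^2*w + (-2)*n^2*δ^2*v + (-2)*n^2*δ^2*u + n^4 +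 n^4*w + n^4*v + n^4*v*w + (-1)*n^4*u + (-1)*n^4*u*w + (-1)*n^4*u*v + (-1)*n^4*u^2 + (-1)*s^2*n^2*δ^2 + (-1)*s^2*n^4*u) * hs + ((9) + (12)*w + (-5)*w^2 + (-12)*w^3 + (-4)*w^4 + (12)*v + (8)*v*w + (-12)*v*w^2 + (-8)*v*w^3 + (-5)*v^2 + (-12)*v^2*w + (-8)*v^2*w^2 + (-12)*v^3 + (-8)*v^3*w + (-4)*v^4 + (12)*u + (8)*u*w + (-12)*u*w^2 + (-8)*u*w^3 + (8)*u*v + (18)*u*v*w + (16)*u*v*w^2 + (8)*u*v*w^3 + (-12)*u*v^2 + (16)*u*v^2*w + (16)*u*v^2*w^2 + (-8)*u*v^3 + (8)*u*v^3*w + (-5)*u^2 + (-12)*u^2*w + (-8)*u^2*w^2 + (-12)*u^2*v + (16)*u^2*v*w + (16)*u^2*v*w^2 + (-8)*u^2*v^2 + (16)*u^2*v^2*w + (-12)*u^3 + (-8)*u^3*w + (-8)*u^3*v + (8)*u^3*v*w + (-4)*u^4 + (-9)*δ^2 + (-12)*δ^2*w + (-4)*δ^2*w^2 + (-12)*δ^2*v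 + (-8)*δ^2*v*w + (-4)*δ^2*v^2 + (-12)*δ^2*u + (-8)*δ^2*u*w + (-8)*δ^2*u*v + (-4)*δ^2*u^2 + (3)*n^2 + (5)*n^2*w + (2)*n^2*w^2 + (5)*n^2*v + (7)*n^2*v*w + (2)*n^2*v*w^2 + (2)*n^2*v^2 + (2)*n^2*v^2*w + (-1)*n^2*u + (-3)*n^2*u*w + (-2)*n^2*u*w^2 + (-3)*n^2*u*v + (-2)*n^2*u*v*w + (-2)*n^2*u*v^2 + (-5)*n^2*u^2 + (-4)*n^2*u^2*w + (-4)*n^2*u^2*v + (-2)*n^2*u^3) * hn + ((-18) + (-24)*w + w^2 + (12)*w^3 + (4)*w^4 + (-24)*v + (2)*v*w + (36)*v*w^2 + (16)*v*w^3 + v^2 + (36)*v^2*w + (24)*v^2*w^2 + (12)*v^3 + (16)*v^3*w + (4)*v^4 + (-42)*u + (-40)*u*w + (4)*u*w^2 + (8)*u*w^3 + (-40)*u*v + (8)*u*v*w + (24)*u*v*w^2 + (4)*u*v^2 + (24)*u*v^2*w + (8)*u*v^3 + (-32)*u^2 + (-16)*u^2*w + (4)*u^2*w^2 + (-16)*u^2*v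 + (8)*u^2*v*w + (4)*u^2*v^2 + (-8)*u^3) * hδ + ((-2)*u*v*w*n^2 + (-1)*u*v^2*w*n^2 + (1)*u*w*n^4 + (-2)*u^2*v*w*n^2 + (-1)*v*w*n^4 + (-1)*v^2*w*n^2 + (-1)*v^3*w*n^2 + (-1)*w*n^4 + (-1)*u*v*w^2*n^2 + (3)*u*w^2*n^2 + (1)*u^2*w^2*n^2 + (-1)*v*w^2*n^2 + (-2)*v^2*w^2*n^2 + (2)*w^2*n^2 + (1)*u*w^3*n^2 + (-1)*v*w^3*n^2 + (1)*w^3*n^2 + (1)*u*v*n^4 + (3)*u*v^2*n^2 + (1)*u*v^3*n^2 + (-3)*u*n^2 + (1)*u*n^4 + (1)*u*s^2*n^4 + (1)*u^2*v^2*n^2 + (-1)*u^2*n^2 + (1)*u^2*n^4 + (-1)*v*n^4 + (2)*v^2*n^2 + (1)*v^3*n^2 + (-1)*δ^2 + (-1)*n^2 + (-1)*n^4 + (1)*δ^2*s^2*n^2 + (2)*u*δ^2*n^2 + (2)*v*δ^2*n^2 + (2)*w*δ^2*n^2 + (3)*δ^2*n^2) * hs + ((-9)*u*w + (-7)*v*w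 + (-11)*w + (-9)*u*v + (-13)*u + (4)*u^2 + (-11)*v + (-8) + (-16)*u^2*v*w + (-16)*u*v^2*w + (-16)*u*v*w^2 + (-18)*u*v*w + (-16)*u^2*v^2*w + (-8)*u*v^3*w + (-16)*u*v^2*w^2 + (2)*u*v*w*n^2 + (2)*u*w^2*n^2 + (3)*u*w*n^2 + (-8)*u^3*v*w + (-16)*u^2*v*w^2 + (-2)*v^2*w*n^2 + (-2)*v*w^2*n^2 + (-7)*v*w*n^2 + (8)*v^3*w + (8)*v^2*w^2 + (12)*v^2*w + (-2)*w^2*n^2 + (-5)*w*n^2 + (8)*u^2*w^2 + (8)*u*w^3 + (12)*u*w^2 + (8)*v*w^3 + (12)*v*w^2 + (12)*w^3 + (5)*w^2 + (-8)*u*v*w^3 + (4)*w^4 + (2)*u*v^2*n^2 + (3)*u*v*n^2 + (8)*u^2*v^2 + (8)*u*v^3 + (12)*u*v^2 + (5)*u^2*n^2 + (1)*u*n^2 + (12)*u^3 + (12)*u^2*v + (12)*u^2*w + (2)*u^3*n^2 + (-2)*v^2*n^2 + (-5)*v*n^2 + (12)*v^3 + (5)*v^2 + (4)*v^4 + (-3)*n^2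 + (4)*u^2*v*n^2 + (4)*u^2*w*n^2 + (4)*u^4 + (4)*u^2*δ^2 + (8)*u*v*δ^2 + (8)*u*w*δ^2 + (12)*u*δ^2 + (4)*v^2*δ^2 + (8)*v*w*δ^2 + (12)*v*δ^2 + (4)*w^2*δ^2 + (12)*w*δ^2 + (9)*δ^2 + (8)*u^3*v + (8)*u^3*w) * hn + ((40)*u + (22)*v + (22)*w + (15) + (8)*u^3 + (32)*u^2 + (-4)*u^2*v^2 + (-8)*u^2*v*w + (-4)*u^2*w^2 + (16)*u^2*v + (40)*u*v + (-8)*u*v^3 + (-24)*u*v^2*w + (-24)*u*v*w^2 + (16)*u^2*w + (40)*u*w + (-8)*u*w^3 + (-4)*u*v^2 + (-8)*u*v*w + (-4)*u*w^2 + (-1)*v^2 + (-4)*v^4 + (-16)*v^3*w + (-24)*v^2*w^2 + (-2)*v*w + (-16)*v*w^3 + (-12)*v^3 + (-36)*v^2*w + (-36)*v*w^2 + (-1)*w^2 + (-4)*w^4 + (-12)*w^3) * hδ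
  · linear_combination ((-1)*s^2*n*v) * hs + ((-1)*v*n + (1)*v*s^2*n) * hs
  · linear_combination ((-1)*s^2*n*w) * hs + ((-1)*w*n + (1)*w*s^2*n) * hs
  · linear_combination ((6)*n^4*δ + (10)*n^4*δ*w + n^4*δ*w^2 + (-5)*n^4*δ*w^3 + (-2)*n^4*δ*w^4 + (10)*n^4*δ*v + (2)*n^4*δ*v*w + (-15)*n^4*δ*v*w^2 + (-8)*n^4*δ*v*w^3 + n^4*δ*v^2 + (-15)*n^4*δ*v^2*w + (-12)*n^4*δ*v^2*w^2 + (-5)*n^4*δ*v^3 + (-8)*n^4*δ*v^3*w + (-2)*n^4*δ*v^4 + (10)*n^4*δ*u + (14)*n^4*δ*u*w + (2)*n^4*δ*u*w^2 + (-2)*n^4*δ*u*w^3 + (14)*n^4*δ*u*v + (4)*n^4*δ*u*v*w + (-6)*n^4*δ*u*v*w^2 + (2)*n^4*δ*u*v^2 + (-6)*n^4*δ*u*v^2*w + (-2)*n^4*δ*u*v^3 + (4)*n^4*δ*u^2 + (4)*n^4*δ*u^2*w + (4)*n^4*δ*u^2*v + (-3)*n^6*δ + (-5)*n^6*δ*w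 + (-2)*n^6*δ*w^2 + (-5)*n^6*δ*v + (-4)*n^6*δ*v*w + (-2)*n^6*δ*v^2 + (-2)*n^6*δ*u + (-2)*n^6*δ*u*w + (-2)*n^6*δ*u*v + (2)*s^2*n^4*δ + (2)*s^2*n^4*δ*w + (-1)*s^2*n^4*δ*w^2 + (-1)*s^2*n^4*δ*w^3 + (2)*s^2*n^4*δ*v + (-2)*s^2*n^4*δ*v*w + (-3)*s^2*n^4*δ*v*w^2 + (-1)*s^2*n^4*δ*v^2 + (-3)*s^2*n^4*δ*v^2*w + (-1)*s^2*n^4*δ*v^3 + (2)*s^2*n^4*δ*u + (2)*s^2*n^4*δ*u*w + (2)*s^2*n^4*δ*u*v + (-1)*s^2*n^6*δ + (-1)*s^2*n^6*δ*w + (-1)*s^2*n^6*δ*v + (-1)*s^4*n^6*δ) * hs + ((-9)*n^4*δ + (-21)*n^4*δ*w + (-16)*n^4*δ*w^2 + (-4)*n^4*δ*w^3 + (-21)*n^4*δ*v + (-32)*n^4*δ*v*w + (-12)*n^4*δ*v*w^2 + (-16)*n^4*δ*v^2 + (-12)*n^4*δ*v^2*w + (-4)*n^4*δ*v^3 + (-12)*n^4*δ*u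 + (-20)*n^4*δ*u*w + (-8)*n^4*δ*u*w^2 + (-20)*n^4*δ*u*v + (-16)*n^4*δ*u*v*w + (-8)*n^4*δ*u*v^2 + (-4)*n^4*δ*u^2 + (-4)*n^4*δ*u^2*w + (-4)*n^4*δ*u^2*v) * hn + ((-1)*δ*n^2 + (-2)*u*v*δ*s^2*n^4 + (-2)*u*w*δ*s^2*n^4 + (-2)*u*δ*s^2*n^4 + (2)*v*w*δ*s^2*n^4 + (3)*v*w^2*δ*s^2*n^4 + (-2)*v*δ*s^2*n^4 + (3)*v^2*w*δ*s^2*n^4 + (1)*v^2*δ*s^2*n^4 + (1)*v^3*δ*s^2*n^4 + (-2)*w*δ*s^2*n^4 + (1)*w^2*δ*s^2*n^4 + (1)*w^3*δ*s^2*n^4 + (-2)*δ*s^2*n^4 + (1)*v*δ*s^2*n^6 + (1)*w*δ*s^2*n^6 + (1)*δ*s^2*n^6 + (1)*δ*s^4*n^6 + (-4)*u^2*v*δ*n^4 + (-2)*u*v^2*δ*n^4 + (-4)*u*v*w*δ*n^4 + (-14)*u*v*δ*n^4 + (-4)*u^2*w*δ*n^4 + (-2)*u*w^2*δ*n^4 +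 (-14)*u*w*δ*n^4 + (-4)*u^2*δ*n^4 + (-10)*u*δ*n^4 + (15)*v^2*w*δ*n^4 + (15)*v*w^2*δ*n^4 + (-2)*v*w*δ*n^4 + (6)*u*v*w^2*δ*n^4 + (12)*v^2*w^2*δ*n^4 + (8)*v*w^3*δ*n^4 + (-1)*v^2*δ*n^4 + (-10)*v*δ*n^4 + (6)*u*v^2*w*δ*n^4 + (8)*v^3*w*δ*n^4 + (5)*v^3*δ*n^4 + (2)*u*v^3*δ*n^4 + (2)*v^4*δ*n^4 + (-1)*w^2*δ*n^4 + (-10)*w*δ*n^4 + (5)*w^3*δ*n^4 + (2)*u*w^3*δ*n^4 + (2)*w^4*δ*n^4 + (-6)*δ*n^4 + (2)*u*v*δ*n^6 + (2)*u*w*δ*n^6 + (2)*u*δ*n^6 + (2)*v^2*δ*n^6 + (4)*v*w*δ*n^6 + (5)*v*δ*n^6 + (2)*w^2*δ*n^6 + (5)*w*δ*n^6 + (3)*δ*n^6) * hs + ((-1)*δ + (-1)*v*δ + (-1)*w*δ + (4)*u^2*v*δ*n^4 + (4)*u^2*w*δ*n^4 + (4)*u^2*δ*n^4 + (8)*u*v^2*δ*n^4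 + (16)*u*v*w*δ*n^4 + (20)*u*v*δ*n^4 + (8)*u*w^2*δ*n^4 + (20)*u*w*δ*n^4 + (12)*u*δ*n^4 + (4)*v^3*δ*n^4 + (12)*v^2*w*δ*n^4 + (16)*v^2*δ*n^4 + (12)*v*w^2*δ*n^4 + (32)*v*w*δ*n^4 + (21)*v*δ*n^4 + (4)*w^3*δ*n^4 + (16)*w^2*δ*n^4 + (21)*w*δ*n^4 + (9)*δ*n^4) * hn
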